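/- Let s, r be natural numbers with 1 ≤ s ≤ r. In the polynomial ring 𝔽₂[a,b], the element b^r does NOT belong to the ideal generated by a^(s+1) and ∑_{i=0}^{s} a^i * b^(r-i). -/

import Mathlib

open MvPolynomial

theorem aux_poly (s r : ℕ) (hs : 1 ≤ s) (hsr : s ≤ r)
    (F G : Polynomial (Polynomial (ZMod 2)))
    (h : F * Polynomial.X ^ (s + 1) +
        G * (∑ i ∈ Finset.range (s + 1),
          Polynomial.X ^ i * Polynomial.C ((Polynomial.X : Polynomial (ZMod 2)) ^ (r - i)))
      = Polynomial.C ((Polynomial.X : Polynomial (ZMod 2)) ^ r)) : False := by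
  classical
  set b : Polynomial (ZMod 2) := Polynomial.X with hb
  -- Step 1: Q = X * Q₂ + C (b^r)
  set Q₂ : Polynomial (Polynomial (ZMod 2)) :=
    ∑ i ∈ Finset.range s, Polynomial.X ^ i * Polynomial.C (b ^ (r - 1 - i)) with hQ2
  have hQ : (∑ i ∈ Finset.range (s + 1), Polynomial.X ^ i * Polynomial.C (b ^ (r - i)))
      = Polynomial.X * Q₂ + Polynomial.C (b ^ r) := by
    rw [Finset.sum_range_succ']
    simp only [pow_zero, one_mul, Nat.sub_zero]
    rw [hQ2, Finset.mul_sum]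
    rw [add_left_inj]
    apply Finset.sum_congr rfl
    intro i hi
    rw [show r - (i + 1) = r - 1 - i from by omega, pow_succ]
    ring
  rw [hQ] at h
  -- Step 2: eval at 0 gives G.eval 0 = 1
  have h0 := congrArg (Polynomial.eval (0 : Polynomial (ZMod 2))) h
  simp only [Polynomial.eval_add, Polynomial.eval_mul, Polynomial.eval_pow,
    Polynomial.eval_X, Polynomial.eval_C, zero_pow (Nat.succ_ne_zero s), mul_zero,
    zero_mul, zero_add, add_zero] at h0
  have hbr : (b : Polynomial (ZMod 2)) ^ r ≠ 0 := pow_ne_zero _ Polynomial.X_ne_zero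
  have hG0 : G.eval 0 = 1 := mul_right_cancel₀ hbr (h0.trans (one_mul _).symm)
  -- Step 3: G = X * H + 1
  set H := G.divX with hH
  have hGdec : G = Polynomial.X * H + 1 := by
    have h1 := Polynomial.X_mul_divX_add G
    rw [Polynomial.coeff_zero_eq_eval_zero, hG0, map_one] at h1
    exact h1.symm
  rw [hGdec] at h
  -- Step 4: cancel X
  have hX : (Polynomial.X : Polynomial (Polynomial (ZMod 2))) ≠ 0 := Polynomial.X_ne_zero
  have key : F * Polynomial.X ^ s + Polynomial.X * H * Q₂ + H * Polynomial.C (b ^ r) + Q₂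
      = 0 := by
    apply mul_left_cancel₀ hX
    rw [mul_zero]
    have : Polynomial.X * (F * Polynomial.X ^ s + Polynomial.X * H * Q₂
        + H * Polynomial.C (b ^ r) + Q₂)
        = F * Polynomial.X ^ (s + 1) + (Polynomial.X * H + 1)
          * (Polynomial.X * Q₂ + Polynomial.C (b ^ r)) - Polynomial.C (b ^ r) := by
      rw [pow_succ]; ring
    rw [this, h, sub_self]
  -- Step 5: eval at 0 again
  have h2 := congrArg (Polynomial.eval 0) key
  have hQ20 : Q₂.eval 0 = b ^ (r - 1) := by
    rw [hQ2, Polynomial.eval_finset_sum]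
    rw [Finset.sum_eq_single 0]
    · simp
    · intro i hi hne
      simp [zero_pow hne]
    · intro hh
      exact absurd (Finset.mem_range.mpr (by omega)) hh
  simp only [Polynomial.eval_add, Polynomial.eval_mul, Polynomial.eval_pow,
    Polynomial.eval_X, Polynomial.eval_C, Polynomial.eval_zero,
    zero_pow (by omega : s ≠ 0), mul_zero, zero_mul, zero_add, add_zero, hQ20] at h2
  -- h2 : H.eval 0 * b ^ r + b ^ (r - 1) = 0
  have h3 : H.eval 0 * b ^ r = b ^ (r - 1) := by
    have h4 := eq_neg_of_add_eq_zero_left h2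
    rwa [CharTwo.neg_eq] at h4
  have := congrArg (fun p => Polynomial.coeff p (r - 1)) h3
  rw [Polynomial.coeff_mul_X_pow'] at this
  · rw [if_neg (by omega)] at this
    rw [Polynomial.coeff_X_pow, if_pos rfl] at this
    exact one_ne_zero this.symm

theorem milnor_br_nonzero (s r : ℕ) (hs : 1 ≤ s) (hsr : s ≤ r) :
    (X 1 : MvPolynomial (Fin 2) (ZMod 2)) ^ r ∉
      Ideal.span {(X 0 : MvPolynomial (Fin 2) (ZMod 2)) ^ (s + 1),
        ∑ i ∈ Finset.range (s + 1), (X 0 : MvPolynomial (Fin 2) (ZMod 2)) ^ i * X 1 ^ (r - i)} := by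
  rw [Ideal.mem_span_pair]
  rintro ⟨f, g, hfg⟩
  have h := congrArg (MvPolynomial.aeval (R := ZMod 2)
    ![(Polynomial.X : Polynomial (Polynomial (ZMod 2))), Polynomial.C Polynomial.X]) hfg
  simp only [map_add, map_mul, map_pow, map_sum, MvPolynomial.aeval_X,
    Matrix.cons_val_zero, Matrix.cons_val_one, Matrix.head_cons] at h
  simp only [← Polynomial.C_pow] at h
  exact aux_poly s r hs hsr _ _ h
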